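/- Let i < j be integers, n an integer, and g a decreasing convex function on [i, j] with n + 1/4 > g(i) ≥ … ≥ g(j−1) ≥ n − 3/4 > g(j). Then (1/2)⌊g(i)+3/4⌋ + Σ_{m=i+1}^{j−1} ⌊g(m)+3/4⌋ + (1/2)⌊g(j)+3/4⌋ ≥ ∫_i^j g(z) dz + (j−i)/4 − 1/2. -/

import Mathlib

open MeasureTheory intervalIntegral

lemma chord_integral_aux {g : ℝ → ℝ} {s : Set ℝ} (hconv : ConvexOn ℝ s g) {a b : ℝ}
    (hab : a ≤ b) (hsub : Set.Icc a b ⊆ s)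
    (hint : IntervalIntegrable g volume a b) :
    ∫ z in a..b, g z ≤ (b - a) * (g a + g b) / 2 := by
  rcases eq_or_lt_of_le hab with rfl | hlt
  · simp
  have hba : (0:ℝ) < b - a := by linarith
  set k : ℝ := (g b - g a) / (b - a) with hk
  have key : ∀ z ∈ Set.Icc a b, g z ≤ g a + (z - a) * k := by
    intro z hz
    obtain ⟨hz1, hz2⟩ := hz
    have h1 : (0:ℝ) ≤ (b - z) / (b - a) := by
      apply div_nonneg <;> linarith
    have h2 : (0:ℝ) ≤ (z - a) / (b - a) := by
      apply div_nonneg <;> linarith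
    have h3 : (b - z) / (b - a) + (z - a) / (b - a) = 1 := by
      field_simp
      ring
    have h4 : ((b - z) / (b - a)) • a + ((z - a) / (b - a)) • b = z := by
      rw [smul_eq_mul, smul_eq_mul]
      field_simp
      ring
    have h := hconv.2 (hsub (Set.left_mem_Icc.2 hab)) (hsub (Set.right_mem_Icc.2 hab)) h1 h2 h3
    rw [h4] at h
    calc g z ≤ ((b - z) / (b - a)) • g a + ((z - a) / (b - a)) • g b := h
      _ = g a + (z - a) * k := by
          simp only [smul_eq_mul, hk]
          field_simp
          ring
  have hline : IntervalIntegrable (fun z => g a + (z - a) * k) volume a b := by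
    apply Continuous.intervalIntegrable
    continuity
  have hmono := intervalIntegral.integral_mono_on hab hint hline key
  have hcalc : (∫ z in a..b, (g a + (z - a) * k)) = (b - a) * (g a + g b) / 2 := by
    have h1 : (fun z => g a + (z - a) * k) = fun z => (g a - a * k) + k * z := by
      funext z; ring
    rw [h1, intervalIntegral.integral_add (intervalIntegrable_const)
      (show IntervalIntegrable (fun z => k * z) volume a b by apply Continuous.intervalIntegrable; continuity),
      intervalIntegral.integral_const, intervalIntegral.integral_const_mul, integral_id]
    simp only [smul_eq_mul, hk]
    field_simp
    ring
  linarith [hmono, hcalc.le, hcalc.ge]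
theorem stmt8 (i j n : ℤ) (hij : i < j) (g : ℝ → ℝ)
    (hanti : AntitoneOn g (Set.Icc (i : ℝ) (j : ℝ)))
    (hconv : ConvexOn ℝ (Set.Icc (i : ℝ) (j : ℝ)) g)
    (h1 : g (i : ℝ) < (n : ℝ) + 1 / 4)
    (h2 : (n : ℝ) - 3 / 4 ≤ g ((j : ℝ) - 1))
    (h3 : g (j : ℝ) < (n : ℝ) - 3 / 4) :
    (∫ z in (i : ℝ)..(j : ℝ), g z) + ((j : ℝ) - (i : ℝ)) / 4 - 1 / 2 ≤
      (1 / 2 : ℝ) * ⌊g (i : ℝ) + 3 / 4⌋ +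
        (∑ m ∈ Finset.Icc (i + 1) (j - 1), (⌊g (m : ℝ) + 3 / 4⌋ : ℝ)) +
        (1 / 2 : ℝ) * ⌊g (j : ℝ) + 3 / 4⌋ := by
  have hij1 : i ≤ j - 1 := by omega
  have hijR : (i : ℝ) < (j : ℝ) := by exact_mod_cast hij
  have hij1R : (i : ℝ) ≤ (j : ℝ) - 1 := by
    have : ((i : ℝ)) ≤ ((j : ℝ)) - 1 ↔ (i : ℝ) + 1 ≤ (j : ℝ) := by constructor <;> intro <;> linarith
    rw [this]; exact_mod_cast hij
  set q : ℝ := (j : ℝ) - (i : ℝ) with hq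
  have hq1 : (1 : ℝ) ≤ q := by simp only [hq]; linarith
  -- memberships
  have hmemI : (i : ℝ) ∈ Set.Icc (i : ℝ) (j : ℝ) := ⟨le_refl _, hijR.le⟩
  have hmemJ : (j : ℝ) ∈ Set.Icc (i : ℝ) (j : ℝ) := ⟨hijR.le, le_refl _⟩
  have hmemJ1 : (j : ℝ) - 1 ∈ Set.Icc (i : ℝ) (j : ℝ) := ⟨hij1R, by linarith⟩
  set a : ℝ := g (i : ℝ) with ha
  set b : ℝ := g ((j : ℝ) - 1) with hb
  set c : ℝ := g (j : ℝ) with hc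
  have hba : b ≤ a := hanti hmemI hmemJ1 hij1R
  -- floor values for m ∈ [i, j-1]
  have hfloor : ∀ m : ℤ, i ≤ m → m ≤ j - 1 → ⌊g (m : ℝ) + 3 / 4⌋ = n := by
    intro m hm1 hm2
    have hm1R : (i : ℝ) ≤ (m : ℝ) := by exact_mod_cast hm1
    have hm2R : (m : ℝ) ≤ (j : ℝ) - 1 := by
      have : (m : ℝ) ≤ ((j - 1 : ℤ) : ℝ) := by exact_mod_cast hm2
      push_cast at this; linarith
    have hmem : (m : ℝ) ∈ Set.Icc (i : ℝ) (j : ℝ) := ⟨hm1R, by linarith⟩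
    have hub : g (m : ℝ) ≤ a := hanti hmemI hmem hm1R
    have hlb : b ≤ g (m : ℝ) := hanti hmem hmemJ1 hm2R
    rw [Int.floor_eq_iff]
    constructor
    · push_cast; linarith
    · push_cast; linarith
  have hfi : ⌊g (i : ℝ) + 3 / 4⌋ = n := hfloor i le_rfl hij1
  -- the middle sum
  have hsum : (∑ m ∈ Finset.Icc (i + 1) (j - 1), (⌊g (m : ℝ) + 3 / 4⌋ : ℝ)) = (q - 1) * n := by
    have : ∀ m ∈ Finset.Icc (i + 1) (j - 1), (⌊g (m : ℝ) + 3 / 4⌋ : ℝ) = (n : ℝ) := by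
      intro m hm
      rw [Finset.mem_Icc] at hm
      rw [hfloor m (by omega) hm.2]
    rw [Finset.sum_congr rfl this, Finset.sum_const, nsmul_eq_mul, Int.card_Icc]
    have hc1 : ((j - 1 + 1 - (i + 1)).toNat : ℤ) = j - i - 1 := by omega
    have hc2 : (((j - 1 + 1 - (i + 1)).toNat : ℤ) : ℝ) = (j : ℝ) - i - 1 := by
      exact_mod_cast congrArg (fun z : ℤ => (z : ℝ)) hc1
    push_cast at hc2
    rw [hc2, hq]
  -- floor lower bound at j
  have hFj : c - 1 / 4 < (⌊g (j : ℝ) + 3 / 4⌋ : ℝ) := by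
    have := Int.sub_one_lt_floor (g (j : ℝ) + 3 / 4)
    simp only [← hc] at this ⊢
    linarith
  -- integrability
  have hint1 : IntervalIntegrable g MeasureTheory.volume (i : ℝ) ((j : ℝ) - 1) := by
    apply AntitoneOn.intervalIntegrable
    apply hanti.mono
    rw [Set.uIcc_of_le hij1R]
    exact Set.Icc_subset_Icc le_rfl (by linarith)
  have hint2 : IntervalIntegrable g MeasureTheory.volume ((j : ℝ) - 1) (j : ℝ) := by
    apply AntitoneOn.intervalIntegrable
    apply hanti.mono
    rw [Set.uIcc_of_le (by linarith : (j : ℝ) - 1 ≤ (j : ℝ))]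
    exact Set.Icc_subset_Icc hij1R le_rfl
  -- split the integral
  have hsplit : (∫ z in (i : ℝ)..((j : ℝ) - 1), g z) + (∫ z in ((j : ℝ) - 1)..(j : ℝ), g z)
      = ∫ z in (i : ℝ)..(j : ℝ), g z :=
    intervalIntegral.integral_add_adjacent_intervals hint1 hint2
  -- chord bounds
  have hI1 : (∫ z in (i : ℝ)..((j : ℝ) - 1), g z) ≤ ((j : ℝ) - 1 - (i : ℝ)) * (a + b) / 2 :=
    chord_integral_aux hconv hij1R (Set.Icc_subset_Icc le_rfl (by linarith)) hint1
  have hI2 : (∫ z in ((j : ℝ) - 1)..(j : ℝ), g z) ≤ ((j : ℝ) - ((j : ℝ) - 1)) * (b + c) / 2 :=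
    chord_integral_aux hconv (by linarith) (Set.Icc_subset_Icc hij1R le_rfl) hint2
  -- convexity slope inequality: q * b ≤ a + (q - 1) * c
  have hslope : q * b ≤ a + (q - 1) * c := by
    rcases eq_or_lt_of_le hij1R with heq | hlt
    · have hq1' : q = 1 := by simp only [hq]; linarith
      have : b = a := by rw [hb, ha, ← heq]
      rw [hq1', this]; linarith
    · have := hconv.slope_mono_adjacent hmemI hmemJ hlt (by linarith)
      have hpos : (0 : ℝ) < (j : ℝ) - 1 - (i : ℝ) := by linarith
      rw [show (j : ℝ) - ((j : ℝ) - 1) = 1 by ring, div_one] at this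
      have h' : b - a ≤ ((j : ℝ) - 1 - (i : ℝ)) * (c - b) := by
        rw [div_le_iff₀ hpos] at this; linarith [this]
      have hqm1 : q - 1 = (j : ℝ) - 1 - (i : ℝ) := by simp only [hq]; ring
      nlinarith [h']
  -- final arithmetic
  rw [hfi, hsum, ← hsplit]
  have hprod1 : 0 < q * ((n : ℝ) + 1 / 4 - a) := by
    apply mul_pos (by linarith) (by linarith)
  have hprod2 : 0 ≤ (q - 1) * ((n : ℝ) - 3 / 4 - c) := by
    apply mul_nonneg (by linarith) (by linarith)
  nlinarith [hI1, hI2, hFj, hslope, hprod1, hprod2]
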